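/- Let C₆ > 0, T > 0 and r₀ > 0. Let u₁ : [r₀/2, r₀] → [0,∞) be nondecreasing and absolutely continuous, and let u₀ := ∂ᵣu₁ ≥ 0 denote its derivative (defined almost everywhere). Assume that u₁(r)^{5/6} ≤ (T^{1/3}/(6C₆))·u₀(r) for almost every r ∈ (r₀/2, r₀), and that T^{1/3}·u₁(r₀)^{1/6} ≤ C₆·r₀/2. Then u₁(r₀/2) = 0. -/

import Mathlib

open MeasureTheory Set

lemma pow6_sub_le (p q : ℝ) (hp : 0 ≤ p) (hpq : p ≤ q) :
    q ^ 6 - p ^ 6 ≤ 6 * q ^ 5 * (q - p) := by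
  nlinarith [sq_nonneg (q - p), sq_nonneg (q + p), pow_le_pow_left₀ hp hpq 2,
    pow_le_pow_left₀ hp hpq 3, pow_le_pow_left₀ hp hpq 4, pow_le_pow_left₀ hp hpq 5,
    mul_nonneg (sub_nonneg.2 hpq) (mul_nonneg hp hp),
    mul_nonneg (sub_nonneg.2 hpq) (sub_nonneg.2 (pow_le_pow_left₀ hp hpq 4)),
    mul_nonneg (sub_nonneg.2 hpq) (sub_nonneg.2 (pow_le_pow_left₀ hp hpq 3)),
    mul_nonneg (sub_nonneg.2 hpq) (sub_nonneg.2 (pow_le_pow_left₀ hp hpq 2))]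

set_option maxHeartbeats 1000000 in
/-- The ODE argument in the proof of Theorem 1.1: if `u₁ ≥ 0` is nondecreasing and
absolutely continuous on `[r₀/2, r₀]` with derivative `u₀ ≥ 0` (a.e.), if
`u₁^{5/6} ≤ (T^{1/3}/(6C₆)) u₀` a.e. on `(r₀/2, r₀)` and
`T^{1/3} u₁(r₀)^{1/6} ≤ C₆ r₀/2`, then `u₁(r₀/2) = 0`. -/
theorem ode_argument (C₆ T r₀ : ℝ) (hC₆ : 0 < C₆) (hT : 0 < T) (hr₀ : 0 < r₀)
    (u₁ u₀ : ℝ → ℝ)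
    (hnonneg : ∀ r ∈ Icc (r₀ / 2) r₀, 0 ≤ u₁ r)
    (hmono : MonotoneOn u₁ (Icc (r₀ / 2) r₀))
    (hint : IntervalIntegrable u₀ volume (r₀ / 2) r₀)
    (hac : ∀ a b : ℝ, r₀ / 2 ≤ a → a ≤ b → b ≤ r₀ →
      u₁ b - u₁ a = ∫ r in a..b, u₀ r)
    (hderiv : ∀ᵐ r ∂(volume.restrict (Ioo (r₀ / 2) r₀)), HasDerivAt u₁ (u₀ r) r)
    (hu₀nonneg : ∀ᵐ r ∂(volume.restrict (Ioo (r₀ / 2) r₀)), 0 ≤ u₀ r)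
    (hineq : ∀ᵐ r ∂(volume.restrict (Ioo (r₀ / 2) r₀)),
      (u₁ r) ^ ((5:ℝ) / 6) ≤ T ^ ((1:ℝ) / 3) / (6 * C₆) * u₀ r)
    (hsmall : T ^ ((1:ℝ) / 3) * (u₁ r₀) ^ ((1:ℝ) / 6) ≤ C₆ * (r₀ / 2)) :
    u₁ (r₀ / 2) = 0 := by
  by_contra hne
  have hr2 : r₀ / 2 ≤ r₀ := by linarith
  have hhalf : r₀ / 2 ∈ Icc (r₀ / 2) r₀ := ⟨le_refl _, hr2⟩
  have hm : 0 < u₁ (r₀ / 2) := lt_of_le_of_ne (hnonneg _ hhalf) (Ne.symm hne)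
  have hT3 : (0:ℝ) < T ^ ((1:ℝ) / 3) := Real.rpow_pos_of_pos hT _
  set c : ℝ := C₆ / T ^ ((1:ℝ) / 3) with hc_def
  have hc : 0 < c := div_pos hC₆ hT3
  -- key integrated inequality
  have key : ∀ a b : ℝ, r₀ / 2 ≤ a → a ≤ b → b ≤ r₀ →
      6 * c * (u₁ a) ^ ((5:ℝ) / 6) * (b - a) ≤ u₁ b - u₁ a := by
    intro a b ha hab hb
    have hsub : Ioo a b ⊆ Ioo (r₀ / 2) r₀ := Ioo_subset_Ioo ha hb
    have haIcc : a ∈ Icc (r₀ / 2) r₀ := ⟨ha, hab.trans hb⟩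
    have h6cK : 6 * c * (T ^ ((1:ℝ) / 3) / (6 * C₆)) = 1 := by
      rw [hc_def]; field_simp
    have hae : ∀ᵐ r ∂(volume.restrict (Ioo a b)),
        6 * c * (u₁ a) ^ ((5:ℝ) / 6) ≤ u₀ r := by
      have h1 := ae_restrict_of_ae_restrict_of_subset hsub hineq
      have h2 : ∀ᵐ r ∂(volume.restrict (Ioo a b)), r ∈ Ioo a b :=
        (ae_restrict_iff' measurableSet_Ioo).2 (ae_of_all _ fun _ h => h)
      filter_upwards [h1, h2] with r hr1 hr2'
      have hrIcc : r ∈ Icc (r₀ / 2) r₀ := ⟨ha.trans hr2'.1.le, hr2'.2.le.trans hb⟩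
      have hmono' : u₁ a ≤ u₁ r := hmono haIcc hrIcc hr2'.1.le
      have hpow : (u₁ a) ^ ((5:ℝ) / 6) ≤ (u₁ r) ^ ((5:ℝ) / 6) :=
        Real.rpow_le_rpow (hnonneg _ haIcc) hmono' (by norm_num)
      calc 6 * c * (u₁ a) ^ ((5:ℝ) / 6) ≤ 6 * c * (u₁ r) ^ ((5:ℝ) / 6) := by
            apply mul_le_mul_of_nonneg_left hpow; positivity
        _ ≤ 6 * c * (T ^ ((1:ℝ) / 3) / (6 * C₆) * u₀ r) := by
            apply mul_le_mul_of_nonneg_left hr1; positivity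
        _ = u₀ r := by rw [← mul_assoc, h6cK, one_mul]
    have hint' : IntegrableOn u₀ (Ioo a b) volume := by
      have h2 : IntervalIntegrable u₀ volume a b := by
        apply hint.mono_set
        rw [uIcc_of_le hab, uIcc_of_le hr2]
        exact Icc_subset_Icc ha hb
      exact h2.1.mono_set Ioo_subset_Ioc_self
    have heq : u₁ b - u₁ a = ∫ r in Ioo a b, u₀ r := by
      rw [hac a b ha hab hb, intervalIntegral.integral_of_le hab,
        integral_Ioc_eq_integral_Ioo]
    rw [heq]
    have hconst : ∫ _ in Ioo a b, (6 * c * (u₁ a) ^ ((5:ℝ) / 6)) ∂volume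
        = 6 * c * (u₁ a) ^ ((5:ℝ) / 6) * (b - a) := by
      simp [Real.volume_Ioo, ENNReal.toReal_ofReal (sub_nonneg.2 hab), mul_comm, hab]
    rw [← hconst]
    refine setIntegral_mono_ae_restrict ?_ hint' hae
    exact integrableOn_const measure_Ioo_lt_top.ne
  set v : ℝ → ℝ := fun t => (u₁ t) ^ ((1:ℝ) / 6) with hv_def
  have hv6 : ∀ t ∈ Icc (r₀ / 2) r₀, (v t) ^ (6:ℕ) = u₁ t := by
    intro t ht
    rw [hv_def, ← Real.rpow_natCast ((u₁ t) ^ ((1:ℝ)/6)) 6, ← Real.rpow_mul (hnonneg t ht)]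
    norm_num
  have hv5 : ∀ t ∈ Icc (r₀ / 2) r₀, (v t) ^ (5:ℕ) = (u₁ t) ^ ((5:ℝ) / 6) := by
    intro t ht
    rw [hv_def, ← Real.rpow_natCast ((u₁ t) ^ ((1:ℝ)/6)) 5, ← Real.rpow_mul (hnonneg t ht)]
    norm_num
  -- step inequality
  have step : ∀ a b q : ℝ, r₀ / 2 ≤ a → a ≤ b → b ≤ r₀ → 0 < q →
      (u₁ b) ^ ((5:ℝ) / 6) ≤ (u₁ a) ^ ((5:ℝ) / 6) * q →
      c / q * (b - a) ≤ v b - v a := by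
    intro a b q ha hab hb hq hqb
    have haIcc : a ∈ Icc (r₀ / 2) r₀ := ⟨ha, hab.trans hb⟩
    have hbIcc : b ∈ Icc (r₀ / 2) r₀ := ⟨ha.trans hab, hb⟩
    have hma : 0 < u₁ a := lt_of_lt_of_le hm (hmono hhalf haIcc ha)
    have hvab : v a ≤ v b :=
      Real.rpow_le_rpow (hma.le) (hmono haIcc hbIcc hab) (by norm_num)
    have hva : 0 < v a := Real.rpow_pos_of_pos hma _
    have h1 : u₁ b - u₁ a ≤ 6 * (u₁ b) ^ ((5:ℝ) / 6) * (v b - v a) := by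
      have h := pow6_sub_le (v a) (v b) hva.le hvab
      rw [hv6 a haIcc, hv6 b hbIcc, hv5 b hbIcc] at h
      exact h
    have hA : 0 < (u₁ a) ^ ((5:ℝ) / 6) := Real.rpow_pos_of_pos hma _
    have hkey := key a b ha hab hb
    have hD : 0 ≤ v b - v a := sub_nonneg.2 hvab
    have h2 : u₁ b - u₁ a ≤ 6 * ((u₁ a) ^ ((5:ℝ) / 6) * q) * (v b - v a) := by
      refine h1.trans ?_
      apply mul_le_mul_of_nonneg_right _ hD
      nlinarith
    have h3 : c * (b - a) ≤ q * (v b - v a) := by nlinarith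
    rw [div_mul_eq_mul_div, div_le_iff₀ hq]
    nlinarith
  -- continuity of u₁ and v on the interval
  have hucont : ContinuousOn u₁ (Icc (r₀ / 2) r₀) := by
    have h1 : ContinuousOn (fun t => u₁ (r₀ / 2) + ∫ r in (r₀ / 2)..t, u₀ r)
        (Icc (r₀ / 2) r₀) := by
      refine continuousOn_const.add ?_
      have := intervalIntegral.continuousOn_primitive_interval' hint
        (a := r₀ / 2) (by rw [uIcc_of_le hr2]; exact hhalf)
      rwa [uIcc_of_le hr2] at this
    refine h1.congr fun t ht => ?_
    have := hac (r₀ / 2) t le_rfl ht.1 ht.2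
    linarith
  have hvcont : ContinuousOn v (Icc (r₀ / 2) r₀) :=
    hucont.rpow_const fun x _ => Or.inr (by norm_num)
  -- main estimate via a sup argument
  have main : ∀ q : ℝ, 1 < q → c / q * (r₀ / 2) ≤ v r₀ - v (r₀ / 2) := by
    intro q hq
    have hq0 : 0 < q := lt_trans one_pos hq
    set S := {t ∈ Icc (r₀ / 2) r₀ | c / q * (t - r₀ / 2) ≤ v t - v (r₀ / 2)} with hS_def
    have hS0 : r₀ / 2 ∈ S := ⟨hhalf, by simp⟩
    have hSne : S.Nonempty := ⟨_, hS0⟩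
    have hSbdd : BddAbove S := ⟨r₀, fun t ht => ht.1.2⟩
    have hSclosed : IsClosed S := by
      have : S = Icc (r₀ / 2) r₀ ∩
          (fun t => (v t - v (r₀ / 2)) - c / q * (t - r₀ / 2)) ⁻¹' (Ici 0) := by
        ext t
        simp only [hS_def, mem_setOf_eq, mem_inter_iff, mem_preimage, mem_Ici]
        constructor
        · rintro ⟨h1, h2⟩; exact ⟨h1, by linarith⟩
        · rintro ⟨h1, h2⟩; exact ⟨h1, by linarith⟩
      rw [this]
      apply ContinuousOn.preimage_isClosed_of_isClosed _ isClosed_Icc isClosed_Ici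
      exact ((hvcont.sub continuousOn_const).sub
        (continuousOn_const.mul ((continuousOn_id.sub continuousOn_const))))
    set t₀ := sSup S with ht₀_def
    have ht₀S : t₀ ∈ S := hSclosed.csSup_mem hSne hSbdd
    have ht₀ : t₀ ∈ Icc (r₀ / 2) r₀ := ht₀S.1
    by_cases hcase : t₀ = r₀
    · have := ht₀S.2
      rw [hcase] at this
      convert this using 2
      ring
    · exfalso
      have ht₀lt : t₀ < r₀ := lt_of_le_of_ne ht₀.2 hcase
      have hmt₀ : 0 < u₁ t₀ := lt_of_lt_of_le hm (hmono hhalf ht₀ ht₀.1)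
      have hq65 : 1 < q ^ ((6:ℝ) / 5) :=
        Real.one_lt_rpow_iff_of_pos hq0 |>.2 (Or.inl ⟨hq, by norm_num⟩)
      have htarget : u₁ t₀ < u₁ t₀ * q ^ ((6:ℝ) / 5) := by
        nlinarith
      -- continuity of u₁ at t₀ within the interval
      obtain ⟨δ, hδpos, hδ⟩ : ∃ δ > 0, ∀ t ∈ Icc (r₀ / 2) r₀,
          |t - t₀| < δ → u₁ t < u₁ t₀ * q ^ ((6:ℝ) / 5) := by
        have hcw : ContinuousWithinAt u₁ (Icc (r₀ / 2) r₀) t₀ := hucont t₀ ht₀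
        have hmem : u₁ ⁻¹' (Iio (u₁ t₀ * q ^ ((6:ℝ) / 5))) ∈
            nhdsWithin t₀ (Icc (r₀ / 2) r₀) := hcw (Iio_mem_nhds htarget)
        rw [Metric.mem_nhdsWithin_iff] at hmem
        obtain ⟨δ, hδpos, hδ⟩ := hmem
        refine ⟨δ, hδpos, fun t ht hdist => ?_⟩
        exact hδ ⟨by rwa [Metric.mem_ball, Real.dist_eq], ht⟩
      set b := min (t₀ + δ / 2) r₀ with hb_def
      have hbt : t₀ < b := lt_min (by linarith) ht₀lt
      have hbIcc : b ∈ Icc (r₀ / 2) r₀ :=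
        ⟨ht₀.1.trans hbt.le, min_le_right _ _⟩
      have hub : u₁ b < u₁ t₀ * q ^ ((6:ℝ) / 5) := by
        apply hδ b hbIcc
        rw [abs_sub_lt_iff]
        constructor
        · have : b ≤ t₀ + δ / 2 := min_le_left _ _
          linarith
        · linarith
      have hqb : (u₁ b) ^ ((5:ℝ) / 6) ≤ (u₁ t₀) ^ ((5:ℝ) / 6) * q := by
        have h1 : (u₁ b) ^ ((5:ℝ) / 6) ≤ (u₁ t₀ * q ^ ((6:ℝ) / 5)) ^ ((5:ℝ) / 6) :=
          Real.rpow_le_rpow (hnonneg b hbIcc) hub.le (by norm_num)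
        refine h1.trans_eq ?_
        rw [Real.mul_rpow hmt₀.le (Real.rpow_nonneg hq0.le _)]
        congr 1
        have he : ((6:ℝ) / 5) * (5 / 6) = 1 := by norm_num
        rw [← Real.rpow_mul hq0.le, he, Real.rpow_one]
      have hstep := step t₀ b q ht₀.1 hbt.le (min_le_right _ _) hq0 hqb
      have hbS : b ∈ S := by
        refine ⟨hbIcc, ?_⟩
        have h0 := ht₀S.2
        have hexp : c / q * (b - r₀ / 2) = c / q * (b - t₀) + c / q * (t₀ - r₀ / 2) := by
          ring
        linarith
      exact absurd (le_csSup hSbdd hbS) (not_le.2 hbt)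
  -- pass to the limit q → 1
  have hfin : c * (r₀ / 2) ≤ v r₀ - v (r₀ / 2) := by
    by_contra hlt
    push_neg at hlt
    have hY2 : c / 2 * (r₀ / 2) ≤ v r₀ - v (r₀ / 2) := main 2 one_lt_two
    have hYpos : 0 < v r₀ - v (r₀ / 2) := lt_of_lt_of_le (by positivity) hY2
    have h1 : 1 < c * (r₀ / 2) / (v r₀ - v (r₀ / 2)) := (one_lt_div hYpos).2 hlt
    obtain ⟨q, hq1, hq2⟩ := exists_between h1
    have hq0 : 0 < q := lt_trans one_pos hq1
    have h3 := main q hq1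
    have h4 : q * (v r₀ - v (r₀ / 2)) < c * (r₀ / 2) := (lt_div_iff₀ hYpos).1 hq2
    rw [div_mul_eq_mul_div, div_le_iff₀ hq0] at h3
    nlinarith
  have hvhalf : 0 < v (r₀ / 2) := Real.rpow_pos_of_pos hm _
  have h2 : v r₀ * T ^ ((1:ℝ) / 3) ≤ C₆ * (r₀ / 2) := by
    have hcomm : v r₀ * T ^ ((1:ℝ) / 3) = T ^ ((1:ℝ) / 3) * (u₁ r₀) ^ ((1:ℝ) / 6) := by
      rw [hv_def]; ring
    rw [hcomm]; exact hsmall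
  have hvle : v r₀ ≤ c * (r₀ / 2) := by
    rw [hc_def, div_mul_eq_mul_div, le_div_iff₀ hT3]
    exact h2
  linarith
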